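/- There exists a function F : ℝ → ℝ that is continuous and strictly decreasing on the open interval (2, 4) and satisfies Abel's equation F(2^(x/2)) = F(x) + 1 for every x with 2 < x < 4. -/

import Mathlib

open Real Set Filter Function

namespace AbelAux

noncomputable def f (x : ℝ) : ℝ := (2:ℝ) ^ (x/2)

lemma L_pos : (0:ℝ) < Real.log 2 := Real.log_pos one_lt_two

lemma L_lt_one : Real.log 2 < 1 := by
  have := Real.log_two_lt_d9; linarith

lemma f_eq (x : ℝ) : f x = 2 * Real.exp (Real.log 2 / 2 * (x - 2)) := by
  have h2 : (0:ℝ) < 2 := two_pos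
  rw [f, Real.rpow_def_of_pos h2]
  rw [show (2:ℝ) * Real.exp (Real.log 2 / 2 * (x - 2)) =
      Real.exp (Real.log 2) * Real.exp (Real.log 2 / 2 * (x - 2)) by rw [Real.exp_log h2],
    ← Real.exp_add]
  congr 1
  ring

lemma slope_le {s t : ℝ} (hs : 0 < s) (hst : s ≤ t) :
    t * (Real.exp s - 1) ≤ s * (Real.exp t - 1) := by
  have ht : 0 < t := lt_of_lt_of_le hs hst
  have h := convexOn_exp.secant_mono (Set.mem_univ (0:ℝ)) (Set.mem_univ s) (Set.mem_univ t)
      (ne_of_gt hs) (ne_of_gt ht) hst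
  simp only [Real.exp_zero, sub_zero] at h
  rw [div_le_div_iff₀ hs ht] at h
  nlinarith

lemma slope_lt {s t : ℝ} (hs : 0 < s) (hst : s < t) :
    t * (Real.exp s - 1) < s * (Real.exp t - 1) := by
  have ht : 0 < t := lt_trans hs hst
  have h := strictConvexOn_exp.secant_strict_mono (Set.mem_univ (0:ℝ)) (Set.mem_univ s)
      (Set.mem_univ t) (ne_of_gt hs) (ne_of_gt ht) hst
  simp only [Real.exp_zero, sub_zero] at h
  rw [div_lt_div_iff₀ hs ht] at h
  nlinarith

/-- lower bound: `f x - 2 ≥ log 2 * (x-2)` for `x ≥ 2`. -/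
lemma f_lower {x : ℝ} (hx : 2 ≤ x) : Real.log 2 * (x - 2) ≤ f x - 2 := by
  rw [f_eq]
  have h := Real.add_one_le_exp (Real.log 2 / 2 * (x - 2))
  nlinarith [L_pos]

lemma f_gt_two {x : ℝ} (hx : 2 < x) : 2 < f x := by
  have := f_lower (le_of_lt hx)
  nlinarith [L_pos]

/-- upper bound: `f x - 2 ≤ log 2 * (x-2) * exp (log 2 / 2 * (x-2))` for `x ≥ 2`. -/
lemma f_upper {x : ℝ} (hx : 2 ≤ x) :
    f x - 2 ≤ Real.log 2 * (x - 2) * Real.exp (Real.log 2 / 2 * (x - 2)) := by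
  rw [f_eq]
  set s := Real.log 2 / 2 * (x - 2) with hs
  have hs0 : 0 ≤ s := by
    have := L_pos; nlinarith
  have h1 := Real.add_one_le_exp (-s)
  have h2 : Real.exp (-s) * Real.exp s = 1 := by rw [← Real.exp_add]; simp
  have h3 := Real.exp_pos s
  nlinarith

/-- expansion: `f y - f x ≥ log 2 * (y - x)` for `2 ≤ x < y`. -/
lemma f_expand {x y : ℝ} (hx : 2 ≤ x) (hxy : x ≤ y) :
    Real.log 2 * (y - x) ≤ f y - f x := by
  rw [f_eq, f_eq]
  have key : Real.exp (Real.log 2 / 2 * (y - 2)) =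
      Real.exp (Real.log 2 / 2 * (x - 2)) * Real.exp (Real.log 2 / 2 * (y - x)) := by
    rw [← Real.exp_add]; congr 1; ring
  rw [key]
  have h1 : 1 ≤ Real.exp (Real.log 2 / 2 * (x - 2)) :=
    Real.one_le_exp (by nlinarith [L_pos])
  have h2 := Real.add_one_le_exp (Real.log 2 / 2 * (y - x))
  have h3 : 0 ≤ Real.log 2 / 2 * (y - x) := by nlinarith [L_pos]
  nlinarith [Real.exp_pos (Real.log 2 / 2 * (y - x))]

noncomputable def rho (b : ℝ) : ℝ := (f b - 2) / (b - 2)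

lemma rho_pos {b : ℝ} (hb : 2 < b) : 0 < rho b :=
  div_pos (by linarith [f_gt_two hb]) (by linarith)

lemma f_lt_self {b : ℝ} (hb2 : 2 < b) (hb4 : b < 4) : f b < b := by
  have h := slope_lt (s := Real.log 2 / 2 * (b - 2)) (t := Real.log 2)
    (by nlinarith [L_pos]) (by nlinarith [L_pos])
  rw [Real.exp_log two_pos] at h
  rw [f_eq]
  nlinarith [L_pos]

lemma rho_lt_one {b : ℝ} (hb2 : 2 < b) (hb4 : b < 4) : rho b < 1 := by
  rw [rho, div_lt_one (by linarith)]
  linarith [f_lt_self hb2 hb4]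

lemma contract {b x : ℝ} (hb2 : 2 < b) (hx : x ∈ Set.Ioc 2 b) :
    f x - 2 ≤ rho b * (x - 2) := by
  obtain ⟨hx2, hxb⟩ := hx
  rcases eq_or_lt_of_le hxb with rfl | hxb
  · rw [rho, div_mul_cancel₀ _ (by intro h; nlinarith [sub_eq_zero.mp h] : x - 2 ≠ 0)]
  have h := slope_le (s := Real.log 2 / 2 * (x - 2)) (t := Real.log 2 / 2 * (b - 2))
    (by nlinarith [L_pos]) (by nlinarith [L_pos])
  rw [rho, div_mul_eq_mul_div, le_div_iff₀ (by linarith : (0:ℝ) < b - 2)]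
  rw [f_eq, f_eq]
  nlinarith [L_pos]

lemma f_cont : Continuous f := by
  have h : f = fun x => 2 * Real.exp (Real.log 2 / 2 * (x - 2)) := funext f_eq
  rw [h]
  continuity

lemma mem_Ioc_inv {b x : ℝ} (hb2 : 2 < b) (hb4 : b < 4) (hx : x ∈ Set.Ioc 2 b) :
    f x ∈ Set.Ioc 2 b := by
  obtain ⟨hx2, hxb⟩ := hx
  refine ⟨f_gt_two hx2, ?_⟩
  have h1 := contract hb2 ⟨hx2, hxb⟩
  have h2 := rho_lt_one hb2 hb4
  have h3 := rho_pos hb2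
  nlinarith

lemma iter_mem {b x : ℝ} (hb2 : 2 < b) (hb4 : b < 4) (hx : x ∈ Set.Ioc 2 b) (n : ℕ) :
    f^[n] x ∈ Set.Ioc 2 b := by
  induction n with
  | zero => simpa using hx
  | succ n ih => rw [Function.iterate_succ_apply']; exact mem_Ioc_inv hb2 hb4 ih

lemma iter_gt_two {x : ℝ} (hx : 2 < x) (n : ℕ) : 2 < f^[n] x := by
  induction n with
  | zero => simpa
  | succ n ih => rw [Function.iterate_succ_apply']; exact f_gt_two ih

lemma iter_decay {b x : ℝ} (hb2 : 2 < b) (hb4 : b < 4) (hx : x ∈ Set.Ioc 2 b) (n : ℕ) :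
    f^[n] x - 2 ≤ rho b ^ n * (x - 2) := by
  induction n with
  | zero => simp
  | succ n ih =>
    rw [Function.iterate_succ_apply', pow_succ]
    have h1 := contract hb2 (iter_mem hb2 hb4 hx n)
    have h3 := rho_pos hb2
    calc f (f^[n] x) - 2 ≤ rho b * (f^[n] x - 2) := h1
      _ ≤ rho b * (rho b ^ n * (x - 2)) := by nlinarith
      _ = rho b ^ n * rho b * (x - 2) := by ring

noncomputable def Kn (n : ℕ) (x : ℝ) : ℝ := (f^[n] x - 2) / (Real.log 2) ^ n

lemma Kn_pos {x : ℝ} (hx : 2 < x) (n : ℕ) : 0 < Kn n x :=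
  div_pos (by linarith [iter_gt_two hx n]) (pow_pos L_pos n)

lemma Kn_mono {x : ℝ} (hx : 2 < x) : Monotone (fun n => Kn n x) := by
  apply monotone_nat_of_le_succ
  intro n
  have hy := iter_gt_two hx n
  have h := f_lower (le_of_lt hy)
  simp only [Kn, Function.iterate_succ_apply', pow_succ]
  rw [div_le_div_iff₀ (pow_pos L_pos n) (by positivity)]
  have hLn := pow_pos L_pos n
  nlinarith [mul_le_mul_of_nonneg_right h (le_of_lt hLn)]

lemma log_Kn_succ {x : ℝ} (hx : 2 < x) (n : ℕ) :
    Real.log (Kn (n+1) x) ≤ Real.log (Kn n x) + Real.log 2 / 2 * (f^[n] x - 2) := by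
  have hy2 : 2 < f^[n] x := iter_gt_two hx n
  have hL := L_pos
  have key : Kn (n+1) x ≤ Kn n x * Real.exp (Real.log 2 / 2 * (f^[n] x - 2)) := by
    have h := f_upper (le_of_lt hy2)
    have e2 : Kn n x * Real.exp (Real.log 2 / 2 * (f^[n] x - 2)) =
        (Real.log 2 * (f^[n] x - 2) * Real.exp (Real.log 2 / 2 * (f^[n] x - 2)))
          / (Real.log 2) ^ (n+1) := by
      rw [Kn, pow_succ]
      field_simp
    rw [e2]
    simp only [Kn, Function.iterate_succ_apply']
    exact (div_le_div_iff_of_pos_right (pow_pos L_pos (n+1))).mpr h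
  have h2 := Real.log_le_log (Kn_pos hx (n+1)) key
  rwa [Real.log_mul (ne_of_gt (Kn_pos hx n)) (Real.exp_ne_zero _), Real.log_exp] at h2

lemma log_Kn_le {b x : ℝ} (hb2 : 2 < b) (hb4 : b < 4) (hx : x ∈ Set.Ioc 2 b) {n m : ℕ}
    (hnm : n ≤ m) :
    Real.log (Kn m x) ≤ Real.log (Kn n x) +
      Real.log 2 / 2 * (b - 2) * ((rho b)^n - (rho b)^m) / (1 - rho b) := by
  induction m, hnm using Nat.le_induction with
  | base => simp
  | succ m hnm ih =>
    have hx2 : 2 < x := hx.1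
    have h1 := log_Kn_succ hx2 m
    have h2 := iter_decay hb2 hb4 hx m
    have hp1 := rho_lt_one hb2 hb4
    have hp0 := rho_pos hb2
    have hL := L_pos
    have hne : (1:ℝ) - rho b ≠ 0 := by intro h; rw [sub_eq_zero] at h; linarith
    have e1 : Real.log 2 / 2 * (b - 2) * ((rho b)^n - (rho b)^(m+1)) / (1 - rho b)
        = Real.log 2 / 2 * (b - 2) * ((rho b)^n - (rho b)^m) / (1 - rho b)
          + Real.log 2 / 2 * ((rho b)^m * (b - 2)) := by
      field_simp
      ring
    rw [e1]
    have hpow : (0:ℝ) < (rho b)^m := pow_pos hp0 m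
    have hxb := hx.2
    have ha : f^[m] x - 2 ≤ (rho b)^m * (b - 2) := by nlinarith
    have h3 := mul_le_mul_of_nonneg_left ha (by linarith : (0:ℝ) ≤ Real.log 2 / 2)
    linarith

lemma Kn_bdd {b x : ℝ} (hb2 : 2 < b) (hb4 : b < 4) (hx : x ∈ Set.Ioc 2 b) :
    BddAbove (Set.range fun n => Kn n x) := by
  have hx2 : 2 < x := hx.1
  have hp1 := rho_lt_one hb2 hb4
  have hp0 := rho_pos hb2
  have hL := L_pos
  have hd : (0:ℝ) < 1 - rho b := by linarith
  refine ⟨Real.exp (Real.log (Kn 0 x) + Real.log 2 / 2 * (b - 2) / (1 - rho b)), ?_⟩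
  rintro _ ⟨m, rfl⟩
  have h := log_Kn_le hb2 hb4 hx (Nat.zero_le m)
  have h2 : Real.log 2 / 2 * (b - 2) * ((rho b)^0 - (rho b)^m) / (1 - rho b)
      ≤ Real.log 2 / 2 * (b - 2) / (1 - rho b) := by
    rw [div_le_div_iff₀ hd hd]
    have hpow : (0:ℝ) < (rho b)^m := pow_pos hp0 m
    have hc2 : (0:ℝ) < Real.log 2 / 2 * (b - 2) := by nlinarith
    simp only [pow_zero]
    nlinarith [mul_pos (mul_pos hc2 hpow) hd]
  have h3 : Real.log (Kn m x) ≤ Real.log (Kn 0 x) + Real.log 2 / 2 * (b - 2) / (1 - rho b) := by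
    linarith
  calc Kn m x = Real.exp (Real.log (Kn m x)) := (Real.exp_log (Kn_pos hx2 m)).symm
    _ ≤ _ := Real.exp_le_exp.mpr h3

noncomputable def K (x : ℝ) : ℝ := ⨆ n, Kn n x

lemma bdd' {x : ℝ} (hx : x ∈ Set.Ioo (2:ℝ) 4) : BddAbove (Set.range fun n => Kn n x) :=
  Kn_bdd hx.1 hx.2 ⟨hx.1, le_refl x⟩

lemma K_tendsto {x : ℝ} (hx : x ∈ Set.Ioo (2:ℝ) 4) :
    Filter.Tendsto (fun n => Kn n x) Filter.atTop (nhds (K x)) :=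
  tendsto_atTop_ciSup (Kn_mono hx.1) (bdd' hx)

lemma Kn_le_K {x : ℝ} (hx : x ∈ Set.Ioo (2:ℝ) 4) (n : ℕ) : Kn n x ≤ K x :=
  le_ciSup (bdd' hx) n

lemma K_pos {x : ℝ} (hx : x ∈ Set.Ioo (2:ℝ) 4) : 0 < K x :=
  lt_of_lt_of_le (Kn_pos hx.1 0) (Kn_le_K hx 0)

lemma f_mem {x : ℝ} (hx : x ∈ Set.Ioo (2:ℝ) 4) : f x ∈ Set.Ioo (2:ℝ) 4 := by
  obtain ⟨h2, h4⟩ := hx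
  have hc := contract h2 (⟨h2, le_refl x⟩ : x ∈ Set.Ioc 2 x)
  have h1 := rho_lt_one h2 h4
  have h0 := rho_pos h2
  exact ⟨f_gt_two h2, by nlinarith⟩

lemma K_feq {x : ℝ} (hx : x ∈ Set.Ioo (2:ℝ) 4) : K (f x) = Real.log 2 * K x := by
  have h1 : Filter.Tendsto (fun n => Kn n (f x)) Filter.atTop (nhds (K (f x))) :=
    K_tendsto (f_mem hx)
  have h2 : (fun n => Kn n (f x)) = fun n => Real.log 2 * Kn (n+1) x := by
    funext n
    simp only [Kn, ← Function.iterate_succ_apply f, pow_succ]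
    field_simp [L_pos.ne']
  have h3 : Filter.Tendsto (fun n => Real.log 2 * Kn (n+1) x) Filter.atTop
      (nhds (Real.log 2 * K x)) :=
    ((K_tendsto hx).comp (Filter.tendsto_add_atTop_nat 1)).const_mul _
  rw [h2] at h1
  exact tendsto_nhds_unique h1 h3

lemma iter_expand {x y : ℝ} (hx : 2 < x) (hxy : x ≤ y) (n : ℕ) :
    (Real.log 2)^n * (y - x) ≤ f^[n] y - f^[n] x := by
  induction n with
  | zero => simp
  | succ n ih =>
    rw [Function.iterate_succ_apply', Function.iterate_succ_apply', pow_succ]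
    have h1 := iter_gt_two hx n
    have hLn := pow_pos L_pos n
    have h2 : f^[n] x ≤ f^[n] y := by nlinarith
    have h3 := f_expand (le_of_lt h1) h2
    nlinarith [mul_le_mul_of_nonneg_left ih (le_of_lt L_pos)]

lemma K_add_le {x y : ℝ} (hx : x ∈ Set.Ioo (2:ℝ) 4) (hy : y ∈ Set.Ioo (2:ℝ) 4) (hxy : x < y) :
    K x + (y - x) ≤ K y := by
  have h1 : Filter.Tendsto (fun n => Kn n y - Kn n x) Filter.atTop (nhds (K y - K x)) :=
    (K_tendsto hy).sub (K_tendsto hx)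
  have h2 : ∀ n, y - x ≤ Kn n y - Kn n x := by
    intro n
    have h := iter_expand hx.1 (le_of_lt hxy) n
    have hLn := pow_pos L_pos n
    simp only [Kn]
    rw [div_sub_div_same, le_div_iff₀ hLn]
    nlinarith
  have := ge_of_tendsto h1 (Filter.Eventually.of_forall h2)
  linarith

lemma log_K_le {b x : ℝ} (hb2 : 2 < b) (hb4 : b < 4) (hx : x ∈ Set.Ioo 2 b) (n : ℕ) :
    Real.log (K x) ≤ Real.log (Kn n x) +
      (Real.log 2 / 2 * (b - 2) / (1 - rho b)) * (rho b)^n := by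
  have hx4 : x ∈ Set.Ioo (2:ℝ) 4 := ⟨hx.1, lt_trans hx.2 hb4⟩
  have hxIoc : x ∈ Set.Ioc 2 b := ⟨hx.1, le_of_lt hx.2⟩
  have hlog : Filter.Tendsto (fun m => Real.log (Kn m x)) Filter.atTop
      (nhds (Real.log (K x))) :=
    ((Real.continuousAt_log (ne_of_gt (K_pos hx4))).tendsto).comp (K_tendsto hx4)
  apply le_of_tendsto hlog
  filter_upwards [Filter.eventually_ge_atTop n] with m hm
  have h := log_Kn_le hb2 hb4 hxIoc hm
  have hp1 := rho_lt_one hb2 hb4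
  have hp0 := rho_pos hb2
  have hd : (0:ℝ) < 1 - rho b := by linarith
  have hL := L_pos
  have h2 : Real.log 2 / 2 * (b - 2) * ((rho b)^n - (rho b)^m) / (1 - rho b)
      ≤ Real.log 2 / 2 * (b - 2) / (1 - rho b) * (rho b)^n := by
    have e : Real.log 2 / 2 * (b - 2) / (1 - rho b) * (rho b)^n
        = Real.log 2 / 2 * (b - 2) * (rho b)^n / (1 - rho b) := by ring
    rw [e, div_le_div_iff₀ hd hd]
    have hc2 : (0:ℝ) < Real.log 2 / 2 * (b - 2) := by nlinarith
    nlinarith [mul_pos (mul_pos hc2 (pow_pos hp0 m)) hd]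
  linarith

lemma Kn_log_contOn (n : ℕ) {b : ℝ} :
    ContinuousOn (fun x => Real.log (Kn n x)) (Set.Ioo 2 b) := by
  have hc : Continuous (fun x => Kn n x) := ((f_cont.iterate n).sub continuous_const).div_const _
  exact ContinuousOn.log hc.continuousOn fun x hx => ne_of_gt (Kn_pos hx.1 n)

lemma unif {b : ℝ} (hb2 : 2 < b) (hb4 : b < 4) :
    TendstoUniformlyOn (fun n x => Real.log (Kn n x)) (fun x => Real.log (K x))
      Filter.atTop (Set.Ioo 2 b) := by
  rw [Metric.tendstoUniformlyOn_iff]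
  intro ε hε
  have hp1 := rho_lt_one hb2 hb4
  have hp0 := rho_pos hb2
  set C := Real.log 2 / 2 * (b - 2) / (1 - rho b) with hC
  have hCp : Filter.Tendsto (fun n => C * (rho b)^n) Filter.atTop (nhds 0) := by
    have h := tendsto_pow_atTop_nhds_zero_of_lt_one (le_of_lt hp0) hp1
    simpa using h.const_mul C
  filter_upwards [hCp.eventually_lt_const hε] with n hn x hx
  have hx4 : x ∈ Set.Ioo (2:ℝ) 4 := ⟨hx.1, lt_trans hx.2 hb4⟩
  have h1 := log_K_le hb2 hb4 hx n
  have h2 : Real.log (Kn n x) ≤ Real.log (K x) :=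
    Real.log_le_log (Kn_pos hx.1 n) (Kn_le_K hx4 n)
  rw [Real.dist_eq, abs_of_nonneg (by linarith)]
  linarith

noncomputable def F (x : ℝ) : ℝ := Real.log (K x) / Real.log (Real.log 2)

lemma logL_neg : Real.log (Real.log 2) < 0 := Real.log_neg L_pos L_lt_one

lemma F_contOn : ContinuousOn F (Set.Ioo 2 4) := by
  intro x hx
  have hb2 : (2:ℝ) < (x+4)/2 := by linarith [hx.1]
  have hb4 : (x+4)/2 < 4 := by linarith [hx.2]
  have hcont : ContinuousOn (fun x => Real.log (K x)) (Set.Ioo 2 ((x+4)/2)) :=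
    (unif hb2 hb4).continuousOn (Filter.Eventually.of_forall fun n => Kn_log_contOn n).frequently
  have hmem : Set.Ioo (2:ℝ) ((x+4)/2) ∈ nhds x :=
    isOpen_Ioo.mem_nhds ⟨hx.1, by linarith [hx.2]⟩
  have h := (hcont.continuousAt hmem).div_const (Real.log (Real.log 2))
  exact (show ContinuousAt F x from h).continuousWithinAt

lemma F_anti : StrictAntiOn F (Set.Ioo 2 4) := by
  intro x hx y hy hxy
  have h1 := K_add_le hx hy hxy
  have h2 : Real.log (K x) < Real.log (K y) := Real.log_lt_log (K_pos hx) (by linarith)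
  have h3 : (Real.log (K y) - Real.log (K x)) / Real.log (Real.log 2) < 0 :=
    div_neg_of_pos_of_neg (by linarith) logL_neg
  have h4 : F y - F x < 0 := by
    simp only [F]
    rw [← sub_div]
    exact h3
  linarith

lemma F_feq {x : ℝ} (hx : x ∈ Set.Ioo (2:ℝ) 4) : F (f x) = F x + 1 := by
  have h1 := K_feq hx
  have hK := K_pos hx
  simp only [F, h1]
  rw [Real.log_mul (ne_of_gt L_pos) (ne_of_gt hK), add_div, div_self (ne_of_lt logL_neg)]
  ring

end AbelAux

/-- There is a function `F`, continuous and strictly decreasing on `(2,4)`, satisfying Abel's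
equation `F(2^(x/2)) = F(x) + 1` for all `x ∈ (2,4)`. -/
theorem abel_solution_on_Ioo_two_four :
    ∃ F : ℝ → ℝ, ContinuousOn F (Set.Ioo 2 4) ∧ StrictAntiOn F (Set.Ioo 2 4) ∧
      ∀ x ∈ Set.Ioo (2 : ℝ) 4, F ((2 : ℝ) ^ (x / 2)) = F x + 1 := by
  exact ⟨AbelAux.F, AbelAux.F_contOn, AbelAux.F_anti, fun x hx => AbelAux.F_feq hx⟩
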